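/- arXiv:math/9902029 — 7 statements merged into one kernel-verified Lean document; each statement's English description precedes it below -/
import Mathlib

section
/- Let n ≥ 2 and A the universal unital *-algebra generated by self-adjoint elements x_{ij} (1 ≤ i,j ≤ n) subject to the magic-unitary relations. Then the map Δ(x_{ij}) = Σ_k x_{ik} ⊗ x_{kj} extends to a well-defined algebra homomorphism Δ : A → A ⊗ A, i.e. the elements X_{ij} = Σ_k x_{ik} ⊗ x_{kj} of A ⊗ A again satisfy the magic-unitary relations. -/
open scoped TensorProduct

/-- The comultiplication of the quantum permutation algebra is well defined:
if `(x i j)` is a magic unitary in a `*`-algebra `A`, then the elements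
`X i j = ∑ k, x i k ⊗ x k j` of `A ⊗ A` (with the entrywise star) again
satisfy the magic unitary relations. -/
theorem stmt4 {A : Type*} [Ring A] [StarRing A] [Algebra ℂ A] [StarModule ℂ A]
    [StarRing (A ⊗[ℂ] A)]
    (hst : ∀ a b : A, star (a ⊗ₜ[ℂ] b) = star a ⊗ₜ[ℂ] star b)
    {n : ℕ} (hn : 2 ≤ n) (x : Fin n → Fin n → A)
    (hstar : ∀ i j, star (x i j) = x i j)
    (hrow : ∀ i j k, x i j * x i k = if j = k then x i j else 0)
    (hcol : ∀ i j k, x j i * x k i = if j = k then x j i else 0)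
    (hrowsum : ∀ i, ∑ l, x i l = 1)
    (hcolsum : ∀ i, ∑ l, x l i = 1) :
    let X : Fin n → Fin n → A ⊗[ℂ] A := fun i j => ∑ k, x i k ⊗ₜ[ℂ] x k j
    (∀ i j, star (X i j) = X i j) ∧
    (∀ i j k, X i j * X i k = if j = k then X i j else 0) ∧
    (∀ i j k, X j i * X k i = if j = k then X j i else 0) ∧
    (∀ i, ∑ l, X i l = 1) ∧ (∀ i, ∑ l, X l i = 1) := by
  intro X
  have hX : ∀ i j, X i j = ∑ k, x i k ⊗ₜ[ℂ] x k j := fun _ _ => rfl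
  refine ⟨?_, ?_, ?_, ?_, ?_⟩
  · intro i j
    rw [hX, star_sum]
    simp only [hst, hstar]
  · intro i j k
    simp only [hX, Finset.sum_mul_sum, Algebra.TensorProduct.tmul_mul_tmul, hrow,
      TensorProduct.ite_tmul, Finset.sum_ite_eq, Finset.mem_univ, if_true, hcol,
      TensorProduct.tmul_ite, TensorProduct.tmul_zero]
    split <;> simp
  · intro i j k
    simp only [hX, Finset.sum_mul_sum, Algebra.TensorProduct.tmul_mul_tmul, hrow,
      TensorProduct.ite_tmul, Finset.sum_ite_eq, Finset.mem_univ, if_true, hcol,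
      TensorProduct.tmul_ite, TensorProduct.tmul_zero]
    split <;> simp
  · intro i
    simp only [hX]
    rw [Finset.sum_comm]
    simp only [← TensorProduct.tmul_sum, hrowsum, ← TensorProduct.sum_tmul, hrowsum]
    exact Algebra.TensorProduct.one_def.symm
  · intro i
    simp only [hX]
    rw [Finset.sum_comm]
    simp only [← TensorProduct.sum_tmul, hcolsum]
    rw [← TensorProduct.tmul_sum, hcolsum]
    exact Algebra.TensorProduct.one_def.symm
end

section
/- For a finite graph G = (V,E) with vertex set {1,...,n} and edge set {γ_1,...,γ_m}, suppose (X_{ij}) is a magic unitary in a unital *-algebra satisfying additionally X_{s(γ_j)i} X_{t(γ_j)k} = 0 whenever (i,k) ∉ E. Then for all edges γ_j, γ_l, γ_{l'}: X_{s(γ_l)s(γ_j)}X_{t(γ_l)t(γ_j)} · X_{s(γ_l)s(γ_{l'})}X_{t(γ_l)t(γ_{l'})} = δ_{j,l'} X_{s(γ_l)s(γ_j)}X_{t(γ_l)t(γ_j)}, provided the commutation relations X_{s(γ_j)s(γ_l)}X_{t(γ_j)t(γ_l)} = X_{t(γ_j)t(γ_l)}X_{s(γ_j)s(γ_l)} hold.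 -/
/-- For a graph with vertex set `Fin n` and (distinct) edges `γ₁,…,γₘ` given by
`E : Fin m → Fin n × Fin n`, if `(X i j)` is a magic unitary satisfying the
graph relation `X (s γⱼ) i * X (t γⱼ) k = 0` whenever `(i,k)` is not an edge,
together with the commutation relations (3.3), then the edge coaction
coefficients `b l j = X (s γₗ) (s γⱼ) * X (t γₗ) (t γⱼ)` satisfy
`b l j * b l l' = δ_{j l'} • b l j`. -/
theorem stmt7 {A : Type*} [Ring A] [StarRing A] [Algebra ℂ A]
    {n m : ℕ} (E : Fin m → Fin n × Fin n) (hE : Function.Injective E)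
    (X : Fin n → Fin n → A)
    (hstar : ∀ i j, star (X i j) = X i j)
    (hrow : ∀ i j k, X i j * X i k = if j = k then X i j else 0)
    (hcol : ∀ i j k, X j i * X k i = if j = k then X j i else 0)
    (hrowsum : ∀ i, ∑ l, X i l = 1)
    (hcolsum : ∀ i, ∑ l, X l i = 1)
    (hvan : ∀ (j : Fin m) (i k : Fin n), (∀ l, E l ≠ (i, k)) →
      X (E j).1 i * X (E j).2 k = 0)
    (hcomm : ∀ j l : Fin m,
      X (E j).1 (E l).1 * X (E j).2 (E l).2 =
        X (E j).2 (E l).2 * X (E j).1 (E l).1) :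
    ∀ j l l' : Fin m,
      (X (E l).1 (E j).1 * X (E l).2 (E j).2) *
        (X (E l).1 (E l').1 * X (E l).2 (E l').2) =
      if j = l' then X (E l).1 (E j).1 * X (E l).2 (E j).2 else 0 := by
  intro j l l'
  set P := X (E l).1 (E j).1
  set Q := X (E l).2 (E j).2
  set R := X (E l).1 (E l').1
  set S := X (E l).2 (E l').2
  have hPQ : P * Q = Q * P := hcomm l j
  have h1 : P * R = if (E j).1 = (E l').1 then P else 0 := hrow (E l).1 (E j).1 (E l').1
  have h2 : Q * S = if (E j).2 = (E l').2 then Q else 0 := hrow (E l).2 (E j).2 (E l').2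
  have calc1 : (P * Q) * (R * S) = Q * ((P * R) * S) := by
    rw [hPQ]; noncomm_ring
  rw [calc1, h1]
  by_cases ha : (E j).1 = (E l').1
  · rw [if_pos ha]
    have : Q * (P * S) = P * (Q * S) := by rw [← mul_assoc, ← hPQ, mul_assoc]
    rw [this, h2]
    by_cases hb : (E j).2 = (E l').2
    · have hjl : j = l' := hE (Prod.ext ha hb)
      rw [if_pos hb, if_pos hjl]
    · have hjl : j ≠ l' := fun h => hb (by rw [h])
      rw [if_neg hb, if_neg hjl, mul_zero]
  · have hjl : j ≠ l' := fun h => ha (by rw [h])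
    rw [if_neg ha, if_neg hjl, zero_mul, mul_zero]
end

section
/- Let B be the universal unital *-algebra generated by eight self-adjoint idempotents y_1,...,y_8 with the relations: y_1y_i = y_iy_1 = 0 for 2 ≤ i ≤ 6; y_2y_i = y_iy_2 = 0 for 3 ≤ i ≤ 6; y_3y_i = y_iy_3 = 0 for i ∈ {4,7,8}; y_4y_i = y_iy_4 = 0 for i ∈ {7,8}; y_5y_i = y_iy_5 = 0 for i ∈ {6,7,8}; y_6y_i = y_iy_6 = 0 for i ∈ {7,8}; y_7y_8 = y_8y_7 = 0; and y_1+y_2+y_3+y_4 = y_1+y_2+y_5+y_6 = y_3+y_4+y_7+y_8 = y_5+y_6+y_7+y_8 = 1. Then B is noncommutative. -/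
/-- The orthogonality pairs of the quantum dihedral group relations
(relations of Proposition 3.3), with indices `0,…,7` for `y₁,…,y₈`. -/
def d4Pairs : Finset (Fin 8 × Fin 8) :=
  {(0,1), (0,2), (0,3), (0,4), (0,5),
   (1,2), (1,3), (1,4), (1,5),
   (2,3), (2,6), (2,7),
   (3,6), (3,7),
   (4,5), (4,6), (4,7),
   (5,6), (5,7),
   (6,7)}

/-- The relations defining the quantum dihedral group algebra `B`. -/
def D4Rels {A : Type*} [Ring A] [StarRing A] (y : Fin 8 → A) : Prop :=
  (∀ i, star (y i) = y i) ∧ (∀ i, y i * y i = y i) ∧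
  (∀ p ∈ d4Pairs, y p.1 * y p.2 = 0 ∧ y p.2 * y p.1 = 0) ∧
  y 0 + y 1 + y 2 + y 3 = 1 ∧ y 0 + y 1 + y 4 + y 5 = 1 ∧
  y 2 + y 3 + y 6 + y 7 = 1 ∧ y 4 + y 5 + y 6 + y 7 = 1


noncomputable def Pmat : Matrix (Fin 2) (Fin 2) ℂ := !![1,0;0,0]
noncomputable def Qmat : Matrix (Fin 2) (Fin 2) ℂ := !![1/2,1/2;1/2,1/2]

noncomputable def yEx : Fin 8 → Matrix (Fin 2) (Fin 2) ℂ :=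
  ![Pmat, 1 - Pmat, 0, 0, 0, 0, Qmat, 1 - Qmat]

lemma starP : star Pmat = Pmat := by
  ext a b
  fin_cases a <;> fin_cases b <;>
    simp [Pmat, Matrix.conjTranspose_apply]

lemma starQ : star Qmat = Qmat := by
  ext a b
  fin_cases a <;> fin_cases b <;>
    simp [Qmat, Matrix.conjTranspose_apply]

lemma PP : Pmat * Pmat = Pmat := by
  ext a b
  fin_cases a <;> fin_cases b <;>
    simp [Pmat, Matrix.mul_apply, Fin.sum_univ_two]

lemma QQ : Qmat * Qmat = Qmat := by
  ext a b
  fin_cases a <;> fin_cases b <;>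
  · simp [Qmat, Matrix.mul_apply, Fin.sum_univ_two]
    norm_num

lemma hP1 : Pmat * (1 - Pmat) = 0 := by simp [mul_sub, PP]
lemma h1P : (1 - Pmat) * Pmat = 0 := by simp [sub_mul, PP]
lemma hQ1 : Qmat * (1 - Qmat) = 0 := by simp [mul_sub, QQ]
lemma h1Q : (1 - Qmat) * Qmat = 0 := by simp [sub_mul, QQ]

lemma idP1 : (1 - Pmat) * (1 - Pmat) = 1 - Pmat := by
  simp [mul_sub, sub_mul, PP]
lemma idQ1 : (1 - Qmat) * (1 - Qmat) = 1 - Qmat := by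
  simp [mul_sub, sub_mul, QQ]

lemma PQ_ne_QP : Pmat * Qmat ≠ Qmat * Pmat := by
  intro h
  have h2 := congrFun (congrFun h 0) 1
  simp [Pmat, Qmat, Matrix.mul_apply, Fin.sum_univ_two] at h2

/-- The universal `*`-algebra `B` on `y₁,…,y₈` subject to the relations of
Proposition 3.3 is noncommutative: the relations do not imply that the
generators commute. -/
theorem stmt8 :
    ¬ (∀ (A : Type) (_ : Ring A) (_ : StarRing A) (_ : Algebra ℂ A)
        (y : Fin 8 → A), D4Rels y → ∀ i j, Commute (y i) (y j)) := by
  intro h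
  have hrel : D4Rels yEx := by
    unfold D4Rels
    refine ⟨?_, ?_, ?_, ?_, ?_, ?_, ?_⟩
    · intro i; fin_cases i
      · exact starP
      · show star (1 - Pmat) = 1 - Pmat; rw [star_sub, star_one, starP]
      · exact star_zero _
      · exact star_zero _
      · exact star_zero _
      · exact star_zero _
      · exact starQ
      · show star (1 - Qmat) = 1 - Qmat; rw [star_sub, star_one, starQ]
    · intro i; fin_cases i
      · exact PP
      · exact idP1
      · exact mul_zero _
      · exact mul_zero _
      · exact mul_zero _
      · exact mul_zero _
      · exact QQ
      · exact idQ1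
    · intro p hp
      fin_cases hp <;>
        exact ⟨by first | exact mul_zero _ | exact zero_mul _ |
                    exact hP1 | exact h1P | exact hQ1 | exact h1Q,
               by first | exact mul_zero _ | exact zero_mul _ |
                    exact hP1 | exact h1P | exact hQ1 | exact h1Q⟩
    · show Pmat + (1 - Pmat) + 0 + 0 = 1; abel
    · show Pmat + (1 - Pmat) + 0 + 0 = 1; abel
    · show (0:Matrix (Fin 2) (Fin 2) ℂ) + 0 + Qmat + (1 - Qmat) = 1; abel
    · show (0:Matrix (Fin 2) (Fin 2) ℂ) + 0 + Qmat + (1 - Qmat) = 1; abel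
  have hc := (h _ _ _ inferInstance yEx hrel 0 6).eq
  exact PQ_ne_QP hc
end

section
/- Let B be the universal *-algebra of Proposition 3.3 (quantum dihedral group algebra). Then B is infinite-dimensional. -/
/-- The defining relations of the quantum dihedral group algebra, as a relation
on the free algebra on eight (self-adjoint) generators. -/
inductive D4Rel : FreeAlgebra ℂ (Fin 8) → FreeAlgebra ℂ (Fin 8) → Prop
  | idem (i : Fin 8) :
      D4Rel (FreeAlgebra.ι ℂ i * FreeAlgebra.ι ℂ i) (FreeAlgebra.ι ℂ i)
  | orth (p : Fin 8 × Fin 8) (h : p ∈ d4Pairs) :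
      D4Rel (FreeAlgebra.ι ℂ p.1 * FreeAlgebra.ι ℂ p.2) 0
  | orth' (p : Fin 8 × Fin 8) (h : p ∈ d4Pairs) :
      D4Rel (FreeAlgebra.ι ℂ p.2 * FreeAlgebra.ι ℂ p.1) 0
  | sum1 : D4Rel (FreeAlgebra.ι ℂ 0 + FreeAlgebra.ι ℂ 1 +
      FreeAlgebra.ι ℂ 2 + FreeAlgebra.ι ℂ 3) 1
  | sum2 : D4Rel (FreeAlgebra.ι ℂ 0 + FreeAlgebra.ι ℂ 1 +
      FreeAlgebra.ι ℂ 4 + FreeAlgebra.ι ℂ 5) 1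
  | sum3 : D4Rel (FreeAlgebra.ι ℂ 2 + FreeAlgebra.ι ℂ 3 +
      FreeAlgebra.ι ℂ 6 + FreeAlgebra.ι ℂ 7) 1
  | sum4 : D4Rel (FreeAlgebra.ι ℂ 4 + FreeAlgebra.ι ℂ 5 +
      FreeAlgebra.ι ℂ 6 + FreeAlgebra.ι ℂ 7) 1

noncomputable section D4Aux

open Polynomial

/-- A 2×2 representation of the generators over `ℂ[X]`. -/
def d4M0 : Matrix (Fin 2) (Fin 2) ℂ[X] := !![1, 0; 0, 0]
def d4M1 : Matrix (Fin 2) (Fin 2) ℂ[X] := !![0, 0; 0, 1]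
def d4M6 : Matrix (Fin 2) (Fin 2) ℂ[X] := !![X, X * (1 - X); 1, 1 - X]
def d4M7 : Matrix (Fin 2) (Fin 2) ℂ[X] := !![1 - X, -(X * (1 - X)); -1, X]

def d4Y : Fin 8 → Matrix (Fin 2) (Fin 2) ℂ[X] :=
  ![d4M0, d4M1, 0, 0, 0, 0, d4M6, d4M7]

@[simp] lemma d4Y0 : d4Y 0 = d4M0 := rfl
@[simp] lemma d4Y1 : d4Y 1 = d4M1 := rfl
@[simp] lemma d4Y2 : d4Y 2 = 0 := rfl
@[simp] lemma d4Y3 : d4Y 3 = 0 := rfl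
@[simp] lemma d4Y4 : d4Y 4 = 0 := rfl
@[simp] lemma d4Y5 : d4Y 5 = 0 := rfl
@[simp] lemma d4Y6 : d4Y 6 = d4M6 := rfl
@[simp] lemma d4Y7 : d4Y 7 = d4M7 := rfl

/-- The representation of the free algebra. -/
def d4F : FreeAlgebra ℂ (Fin 8) →ₐ[ℂ] Matrix (Fin 2) (Fin 2) ℂ[X] :=
  FreeAlgebra.lift ℂ d4Y

lemma d4F_rel : ∀ ⦃a b⦄, D4Rel a b → d4F a = d4F b := by
  intro a b h
  induction h with
  | idem i =>
      fin_cases i <;>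
      · simp only [d4F, map_mul, FreeAlgebra.lift_ι_apply]
        refine Matrix.ext fun i j => ?_
        fin_cases i <;> fin_cases j <;>
          simp [d4M0, d4M1, d4M6, d4M7, Matrix.mul_apply, Fin.sum_univ_two] <;> ring
  | orth p h =>
      fin_cases h <;>
      · simp only [d4F, map_mul, map_zero, FreeAlgebra.lift_ι_apply]
        refine Matrix.ext fun i j => ?_
        fin_cases i <;> fin_cases j <;>
          simp [d4M0, d4M1, d4M6, d4M7, Matrix.mul_apply, Fin.sum_univ_two] <;> ring
  | orth' p h =>
      fin_cases h <;>
      · simp only [d4F, map_mul, map_zero, FreeAlgebra.lift_ι_apply]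
        refine Matrix.ext fun i j => ?_
        fin_cases i <;> fin_cases j <;>
          simp [d4M0, d4M1, d4M6, d4M7, Matrix.mul_apply, Fin.sum_univ_two] <;> ring
  | sum1 =>
      simp only [d4F, map_add, map_one, FreeAlgebra.lift_ι_apply]
      refine Matrix.ext fun i j => ?_
      fin_cases i <;> fin_cases j <;>
        simp [d4M0, d4M1, d4M6, d4M7, Matrix.one_apply] <;> ring
  | sum2 =>
      simp only [d4F, map_add, map_one, FreeAlgebra.lift_ι_apply]
      refine Matrix.ext fun i j => ?_
      fin_cases i <;> fin_cases j <;>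
        simp [d4M0, d4M1, d4M6, d4M7, Matrix.one_apply] <;> ring
  | sum3 =>
      simp only [d4F, map_add, map_one, FreeAlgebra.lift_ι_apply]
      refine Matrix.ext fun i j => ?_
      fin_cases i <;> fin_cases j <;>
        simp [d4M0, d4M1, d4M6, d4M7, Matrix.one_apply] <;> ring
  | sum4 =>
      simp only [d4F, map_add, map_one, FreeAlgebra.lift_ι_apply]
      refine Matrix.ext fun i j => ?_
      fin_cases i <;> fin_cases j <;>
        simp [d4M0, d4M1, d4M6, d4M7, Matrix.one_apply] <;> ring

/-- The induced representation of the quotient algebra. -/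
def d4Phi : RingQuot D4Rel →ₐ[ℂ] Matrix (Fin 2) (Fin 2) ℂ[X] :=
  RingQuot.liftAlgHom ℂ ⟨d4F, d4F_rel⟩

/-- The element `y₁ y₇ y₁` of the quotient. -/
def d4z : RingQuot D4Rel :=
  RingQuot.mkAlgHom ℂ D4Rel (FreeAlgebra.ι ℂ 0 * FreeAlgebra.ι ℂ 6 * FreeAlgebra.ι ℂ 0)

lemma d4Phi_z : d4Phi d4z = !![X, 0; 0, 0] := by
  rw [d4z, d4Phi, RingQuot.liftAlgHom_mkAlgHom_apply]
  simp only [d4F, map_mul, FreeAlgebra.lift_ι_apply, d4Y0, d4Y6]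
  refine Matrix.ext fun i j => ?_
  fin_cases i <;> fin_cases j <;>
    simp [d4M0, d4M6, Matrix.mul_apply, Fin.sum_univ_two] <;> ring

lemma d4Phi_z_pow (k : ℕ) : d4Phi (d4z ^ k) 0 0 = X ^ k := by
  rw [map_pow, d4Phi_z]
  induction k with
  | zero => simp [Matrix.one_apply]
  | succ n ih =>
      rw [pow_succ, pow_succ, Matrix.mul_apply, Fin.sum_univ_two]
      simp [ih]

/-- The `(0,0)` entry of the representation, as a linear map. -/
def d4L : RingQuot D4Rel →ₗ[ℂ] ℂ[X] where
  toFun x := d4Phi x 0 0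
  map_add' x y := by simp [map_add, Matrix.add_apply]
  map_smul' c x := by simp [map_smul, Matrix.smul_apply]

lemma d4L_surjective : Function.Surjective d4L := by
  intro p
  induction p using Polynomial.induction_on' with
  | add p q hp hq =>
      obtain ⟨x, hx⟩ := hp
      obtain ⟨y, hy⟩ := hq
      exact ⟨x + y, by rw [map_add, hx, hy]⟩
  | monomial n a =>
      refine ⟨a • d4z ^ n, ?_⟩
      rw [map_smul]
      show a • (d4Phi (d4z ^ n) 0 0) = _
      rw [d4Phi_z_pow, Polynomial.smul_X_eq_monomial]

end D4Aux

/-- The quantum dihedral group algebra `B` of Proposition 3.3 is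
infinite-dimensional over `ℂ`. -/
theorem stmt11 : ¬ FiniteDimensional ℂ (RingQuot D4Rel) := by
  intro h
  exact Polynomial.not_finite (Module.Finite.of_surjective d4L d4L_surjective)
end

section
/- Let G be the complete graph on n vertices (E = V × V, or all pairs of distinct vertices). Then in A_aut^o(G), the relations (3.3) force all generators X_{ij} to pairwise commute, i.e. the algebra A_aut^o(G) is commutative. -/
/-- For the complete graph on `n` vertices (all pairs of distinct vertices are
edges), the graph relations (3.3) force all entries of the magic unitary to
pairwise commute: `A_aut^o(G)` is commutative. -/
theorem stmt13 {A : Type*} [Ring A] [StarRing A] [Algebra ℂ A] {n : ℕ}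
    (X : Fin n → Fin n → A)
    (hstar : ∀ i j, star (X i j) = X i j)
    (hrow : ∀ i j k, X i j * X i k = if j = k then X i j else 0)
    (hcol : ∀ i j k, X j i * X k i = if j = k then X j i else 0)
    (hrowsum : ∀ i, ∑ l, X i l = 1)
    (hcolsum : ∀ i, ∑ l, X l i = 1)
    (h33 : ∀ a b c d : Fin n, a ≠ b → c ≠ d →
      X a c * X b d = X b d * X a c)
    (h32 : ∀ a b i : Fin n, a ≠ b → X a i * X b i = 0) :
    ∀ i j k l, Commute (X i j) (X k l) := by
  intro i j k l
  unfold Commute SemiconjBy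
  by_cases hik : i = k
  · subst hik
    by_cases hjl : j = l
    · subst hjl; rfl
    · rw [hrow, hrow, if_neg hjl, if_neg (Ne.symm hjl)]
  · by_cases hjl : j = l
    · subst hjl
      rw [h32 i k j hik, h32 k i j (Ne.symm hik)]
    · exact h33 i k j l hik hjl
end

section
/- In the algebra A_aut^o(G) for the D4-graph (vertices {1,2,3,4}, edges (1,2),(2,1),(3,4),(4,3)): the eight elements X_{11}, X_{12}, X_{13}, X_{14}, X_{31}, X_{32}, X_{33}, X_{34} generate the algebra, i.e. every generator X_{ij} equals one of these eight (X_{22}=X_{11}, X_{21}=X_{12}, X_{24}=X_{13}, X_{23}=X_{14}, X_{42}=X_{31}, X_{41}=X_{32}, X_{44}=X_{33}, X_{43}=X_{34}). -/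
/-- The edge set of the D₄-graph: vertices `{0,1,2,3}` and edges
`(0,1), (1,0), (2,3), (3,2)` (i.e. `(1,2),(2,1),(3,4),(4,3)` in the paper). -/
def D4Edges : Finset (Fin 4 × Fin 4) := {(0,1), (1,0), (2,3), (3,2)}

/-- In `A_aut^o(G)` for the D₄-graph, the relations (3.1), (3.2)', (3.3)',
(3.4)' imply that the eight elements `X₁₁, X₁₂, X₁₃, X₁₄, X₃₁, X₃₂, X₃₃, X₃₄` exhaust all the generators. -/
theorem stmt17 {A : Type*} [Ring A] [StarRing A] [Algebra ℂ A]
    (X : Fin 4 → Fin 4 → A)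
    (hstar : ∀ i j, star (X i j) = X i j)
    (hrow : ∀ i j k, X i j * X i k = if j = k then X i j else 0)
    (hcol : ∀ i j k, X j i * X k i = if j = k then X j i else 0)
    (hrowsum : ∀ i, ∑ l, X i l = 1)
    (hcolsum : ∀ i, ∑ l, X l i = 1)
    (h32 : ∀ e ∈ D4Edges, ∀ i k : Fin 4, (i, k) ∉ D4Edges →
      X e.1 i * X e.2 k = 0 ∧ X e.2 k * X e.1 i = 0 ∧
      X i e.1 * X k e.2 = 0 ∧ X k e.2 * X i e.1 = 0)
    (h33 : ∀ e ∈ D4Edges, ∀ f ∈ D4Edges,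
      X e.1 f.1 * X e.2 f.2 = X e.2 f.2 * X e.1 f.1)
    (h34 : ∀ e ∈ D4Edges,
      (∑ f ∈ D4Edges, X f.1 e.1 * X f.2 e.2) = 1 ∧
      (∑ f ∈ D4Edges, X e.1 f.1 * X e.2 f.2) = 1) :
    X 1 1 = X 0 0 ∧ X 1 0 = X 0 1 ∧ X 1 3 = X 0 2 ∧ X 1 2 = X 0 3 ∧
    X 3 1 = X 2 0 ∧ X 3 0 = X 2 1 ∧ X 3 3 = X 2 2 ∧ X 3 2 = X 2 3 := by
  have uniq2 : ∀ j m l : Fin 4, (j, m) ∈ D4Edges → l ≠ m → (j, l) ∉ D4Edges := by decide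
  have uniq1 : ∀ j m l : Fin 4, (j, m) ∈ D4Edges → l ≠ j → (l, m) ∉ D4Edges := by decide
  have key : ∀ a b j m : Fin 4, (a, b) ∈ D4Edges → (j, m) ∈ D4Edges → X a j = X b m := by
    intro a b j m hab hjm
    have h1 : X a j = X a j * X b m := by
      have expand : X a j = ∑ l, X a j * X b l := by
        rw [← Finset.mul_sum, hrowsum b, mul_one]
      rw [Finset.sum_eq_single m
        (fun l _ hl => (h32 (a, b) hab j l (uniq2 j m l hjm hl)).1)
        (fun h => absurd (Finset.mem_univ m) h)] at expand
      exact expand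
    have h2 : X b m = X a j * X b m := by
      have expand : X b m = ∑ l, X a l * X b m := by
        rw [← Finset.sum_mul, hrowsum a, one_mul]
      rw [Finset.sum_eq_single j
        (fun l _ hl => (h32 (a, b) hab l m (uniq1 j m l hjm hl)).1)
        (fun h => absurd (Finset.mem_univ j) h)] at expand
      exact expand
    rw [h1, ← h2]
  exact ⟨key 1 0 1 0 (by decide) (by decide), key 1 0 0 1 (by decide) (by decide),
    key 1 0 3 2 (by decide) (by decide), key 1 0 2 3 (by decide) (by decide),
    key 3 2 1 0 (by decide) (by decide), key 3 2 0 1 (by decide) (by decide),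
    key 3 2 3 2 (by decide) (by decide), key 3 2 2 3 (by decide) (by decide)⟩
end

section
/- Let (x_{ij})_{1≤i,j≤3} be a magic unitary in a unital *-algebra A. Then all entries x_{ij} pairwise commute (for n = 3, and also n ≤ 3, all magic unitaries have commuting entries). -/
section aux

variable {A : Type*} [Ring A]

private lemma magic_triple_sum {M : Type*} [AddCommMonoid M] (f : Fin 3 → M)
    {a b c : Fin 3} (hab : a ≠ b) (hac : a ≠ c) (hbc : b ≠ c) :
    f a + f b + f c = ∑ t, f t := by
  fin_cases a <;> fin_cases b <;> fin_cases c <;>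
    simp_all [Fin.sum_univ_three] <;> abel

private lemma magic_key (p q s t u v : A)
    (h1 : s + q + t = 1) (h2 : p * s = 0)
    (h3 : u + t + v = 1) (h4 : p * u = 0) :
    p * q = p * v := by
  have hq : q = 1 - s - t := by rw [← h1]; abel
  have ht : t = 1 - u - v := by rw [← h3]; abel
  calc p * q = p - p * s - p * t := by rw [hq]; noncomm_ring
    _ = p - p * t := by rw [h2]; abel
    _ = p - (p - p * u - p * v) := by rw [ht]; noncomm_ring
    _ = p * v := by rw [h4]; abel

private lemma magic_key' (p q s t u v : A)
    (h1 : s + q + t = 1) (h2 : s * p = 0)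
    (h3 : u + t + v = 1) (h4 : u * p = 0) :
    q * p = v * p := by
  have hq : q = 1 - s - t := by rw [← h1]; abel
  have ht : t = 1 - u - v := by rw [← h3]; abel
  calc q * p = p - s * p - t * p := by rw [hq]; noncomm_ring
    _ = p - t * p := by rw [h2]; abel
    _ = p - (p - u * p - v * p) := by rw [ht]; noncomm_ring
    _ = v * p := by rw [h4]; abel

variable (x : Fin 3 → Fin 3 → A)
  (hrow : ∀ i j k, x i j * x i k = if j = k then x i j else 0)
  (hcol : ∀ i j k, x j i * x k i = if j = k then x j i else 0)
  (hrowsum : ∀ i, ∑ l, x i l = 1)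
  (hcolsum : ∀ i, ∑ l, x l i = 1)

include hrow hcol hrowsum hcolsum in
/-- Right lemma: `x i j * x k l = x i j * x m n` for a "generic position" pair. -/
private lemma magic_R {i j k l m n : Fin 3}
    (hik : i ≠ k) (him : i ≠ m) (hkm : k ≠ m)
    (hjl : j ≠ l) (hjn : j ≠ n) (hln : l ≠ n) :
    x i j * x k l = x i j * x m n := by
  refine magic_key (x i j) (x k l) (x k j) (x k n) (x i n) (x m n) ?_ ?_ ?_ ?_
  · have := magic_triple_sum (x k) (a := j) (b := l) (c := n) hjl hjn hln
    rw [this, hrowsum k]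
  · simpa [hik] using hcol j i k
  · have := magic_triple_sum (fun r => x r n) (a := i) (b := k) (c := m) hik him hkm
    rw [this, hcolsum n]
  · simpa [hjn] using hrow i j n

include hrow hcol hrowsum hcolsum in
/-- Left lemma: `x k l * x i j = x m n * x i j` for a "generic position" pair. -/
private lemma magic_L {i j k l m n : Fin 3}
    (hik : i ≠ k) (him : i ≠ m) (hkm : k ≠ m)
    (hjl : j ≠ l) (hjn : j ≠ n) (hln : l ≠ n) :
    x k l * x i j = x m n * x i j := by
  refine magic_key' (x i j) (x k l) (x i l) (x m l) (x m j) (x m n) ?_ ?_ ?_ ?_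
  · have := magic_triple_sum (fun r => x r l) (a := i) (b := k) (c := m) hik him hkm
    rw [this, hcolsum l]
  · simpa [Ne.symm hjl] using hrow i l j
  · have := magic_triple_sum (x m) (a := j) (b := l) (c := n) hjl hjn hln
    rw [this, hrowsum m]
  · simpa [him.symm] using hcol j m i

include hrow hcol hrowsum hcolsum in
private lemma magic_mid {i j k l : Fin 3} (hik : i ≠ k) (hjl : j ≠ l) :
    Commute (x i j) (x k l) := by
  obtain ⟨m, him, hkm⟩ :=
    (show ∀ a b : Fin 3, a ≠ b → ∃ c, a ≠ c ∧ b ≠ c by decide) i k hik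
  obtain ⟨n, hjn, hln⟩ :=
    (show ∀ a b : Fin 3, a ≠ b → ∃ c, a ≠ c ∧ b ≠ c by decide) j l hjl
  have e1 : x i j * x k l = x i j * x m n :=
    magic_R x hrow hcol hrowsum hcolsum hik him hkm hjl hjn hln
  have e2 : x i j * x m n = x k l * x m n :=
    magic_L x hrow hcol hrowsum hcolsum him.symm hkm.symm hik hjn.symm hln.symm hjl
  have e3 : x k l * x i j = x k l * x m n :=
    magic_R x hrow hcol hrowsum hcolsum hik.symm hkm him hjl.symm hln hjn
  show x i j * x k l = x k l * x i j
  rw [e1, e2, ← e3]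

end aux

/-- Any 3×3 magic unitary has pairwise commuting entries (so the quantum
permutation group `A_aut(X_n)` is commutative for `n ≤ 3`). -/
theorem stmt18 {A : Type*} [Ring A] [StarRing A]
    (x : Fin 3 → Fin 3 → A)
    (hstar : ∀ i j, star (x i j) = x i j)
    (hrow : ∀ i j k, x i j * x i k = if j = k then x i j else 0)
    (hcol : ∀ i j k, x j i * x k i = if j = k then x j i else 0)
    (hrowsum : ∀ i, ∑ l, x i l = 1)
    (hcolsum : ∀ i, ∑ l, x l i = 1) :
    ∀ i j k l, Commute (x i j) (x k l) := by
  intro i j k l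
  by_cases hik : i = k
  · subst hik
    by_cases hjl : j = l
    · subst hjl; exact Commute.refl _
    · show x i j * x i l = x i l * x i j
      rw [hrow i j l, hrow i l j, if_neg hjl, if_neg (Ne.symm hjl)]
  · by_cases hjl : j = l
    · subst hjl
      show x i j * x k j = x k j * x i j
      rw [hcol j i k, hcol j k i, if_neg hik, if_neg (Ne.symm hik)]
    · exact magic_mid x hrow hcol hrowsum hcolsum hik hjl
end
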